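/- arXiv:1201.0559 — 2 statements merged into one kernel-verified Lean document; each statement's English description precedes it below -/
import Mathlib

section
/- Let M be an ergodic Markov chain with stationary distribution π and let M̃ be its time reversal, M̃(x,y) = π(y)M(y,x)/π(x). Then the spectral expansion of M equals the square root of the second largest eigenvalue of the multiplicative reversiblization R = M·M̃, i.e., λ(M) = √(λ(R)). -/
open Finset Matrix

/-- Row-stochastic matrix. -/
def IsStochastic {n : ℕ} (M : Matrix (Fin n) (Fin n) ℝ) : Prop :=
  (∀ i j, 0 ≤ M i j) ∧ ∀ i, ∑ j, M i j = 1

/-- Probability distribution on `Fin n`. -/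
def IsDist {n : ℕ} (x : Fin n → ℝ) : Prop :=
  (∀ i, 0 ≤ x i) ∧ ∑ i, x i = 1

/-- Total variation distance. -/
noncomputable def tvDist {n : ℕ} (u w : Fin n → ℝ) : ℝ :=
  (1 / 2) * ∑ i, |u i - w i|

/-- Inner product under the π-kernel. -/
noncomputable def piInner {n : ℕ} (π u v : Fin n → ℝ) : ℝ :=
  ∑ i, u i * v i / π i

/-- π-norm. -/
noncomputable def piNorm {n : ℕ} (π u : Fin n → ℝ) : ℝ :=
  Real.sqrt (∑ i, (u i) ^ 2 / π i)

/-- Component of `x` parallel to `π` (in the π-inner product). -/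
noncomputable def parComp {n : ℕ} (π x : Fin n → ℝ) : Fin n → ℝ :=
  fun i => piInner π x π * π i

/-- Component of `x` perpendicular to `π` (in the π-inner product). -/
noncomputable def perpComp {n : ℕ} (π x : Fin n → ℝ) : Fin n → ℝ :=
  fun i => x i - parComp π x i

/-- Spectral expansion of a Markov chain with stationary distribution π. -/
noncomputable def specExp {n : ℕ} (π : Fin n → ℝ) (M : Matrix (Fin n) (Fin n) ℝ) : ℝ :=
  sSup {r : ℝ | ∃ x : Fin n → ℝ, x ≠ 0 ∧ piInner π x π = 0 ∧
    r = piNorm π (x ᵥ* M) / piNorm π x}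

/-- Time reversal of a Markov chain with stationary distribution π. -/
noncomputable def timeReversal {n : ℕ} (π : Fin n → ℝ) (M : Matrix (Fin n) (Fin n) ℝ) :
    Matrix (Fin n) (Fin n) ℝ :=
  fun x y => π y * M y x / π x

section Aux
variable {n : ℕ} {π : Fin n → ℝ}

private lemma vm (x : Fin n → ℝ) (N : Matrix (Fin n) (Fin n) ℝ) (j : Fin n) :
    (x ᵥ* N) j = ∑ i, x i * N i j := by
  simp [Matrix.vecMul, dotProduct]

private lemma piSum_nonneg (hπ : ∀ i, 0 < π i) (u : Fin n → ℝ) : 0 ≤ ∑ i, u i ^ 2 / π i :=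
  Finset.sum_nonneg fun i _ => div_nonneg (sq_nonneg _) (hπ i).le

private lemma piNorm_sq (hπ : ∀ i, 0 < π i) (u : Fin n → ℝ) :
    piNorm π u ^ 2 = ∑ i, u i ^ 2 / π i :=
  Real.sq_sqrt (piSum_nonneg hπ u)

private lemma piInner_self (u : Fin n → ℝ) : piInner π u u = ∑ i, u i ^ 2 / π i := by
  simp [piInner, sq]

private lemma piNorm_nonneg' (u : Fin n → ℝ) : 0 ≤ piNorm π u := Real.sqrt_nonneg _

private lemma piNorm_pos (hπ : ∀ i, 0 < π i) {u : Fin n → ℝ} (hu : u ≠ 0) :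
    0 < piNorm π u := by
  rcases (piNorm_nonneg' u).lt_or_eq with h | h
  · exact h
  · exfalso; apply hu
    have h0 : ∑ i, u i ^ 2 / π i = 0 :=
      (Real.sqrt_eq_zero (piSum_nonneg hπ u)).mp h.symm
    funext i
    have h1 := (Finset.sum_eq_zero_iff_of_nonneg
      (fun i _ => div_nonneg (sq_nonneg _) (hπ i).le)).mp h0 i (Finset.mem_univ i)
    have h2 : u i ^ 2 = 0 := by
      rcases div_eq_zero_iff.mp h1 with h' | h'
      · exact h'
      · exact absurd h' (hπ i).ne'
    exact pow_eq_zero_iff (two_ne_zero) |>.mp h2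

private lemma piCS (hπ : ∀ i, 0 < π i) (u v : Fin n → ℝ) :
    piInner π u v ≤ piNorm π u * piNorm π v := by
  have h2 : ∀ (w : Fin n → ℝ) (i : Fin n), (w i / Real.sqrt (π i)) ^ 2 = w i ^ 2 / π i := by
    intro w i; rw [div_pow, Real.sq_sqrt (hπ i).le]
  calc piInner π u v
      = ∑ i, (u i / Real.sqrt (π i)) * (v i / Real.sqrt (π i)) := by
        refine Finset.sum_congr rfl fun i _ => ?_
        rw [div_mul_div_comm, Real.mul_self_sqrt (hπ i).le]
    _ ≤ Real.sqrt (∑ i, (u i / Real.sqrt (π i)) ^ 2) *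
        Real.sqrt (∑ i, (v i / Real.sqrt (π i)) ^ 2) :=
        Real.sum_mul_le_sqrt_mul_sqrt _ _ _
    _ = piNorm π u * piNorm π v := by
        unfold piNorm
        rw [Finset.sum_congr rfl fun i _ => h2 u i, Finset.sum_congr rfl fun i _ => h2 v i]

private lemma piInner_pi (hπ : ∀ i, 0 < π i) (x : Fin n → ℝ) :
    piInner π x π = ∑ i, x i := by
  refine Finset.sum_congr rfl fun i _ => ?_
  rw [mul_div_assoc, div_self (hπ i).ne', mul_one]

private lemma sum_vecMul_eq {N : Matrix (Fin n) (Fin n) ℝ} (hN : ∀ i, ∑ j, N i j = 1)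
    (x : Fin n → ℝ) : ∑ j, (x ᵥ* N) j = ∑ i, x i := by
  simp only [vm]
  rw [Finset.sum_comm]
  exact Finset.sum_congr rfl fun i _ => by rw [← Finset.mul_sum, hN i, mul_one]

private lemma piAdj (hπ : ∀ i, 0 < π i) (M : Matrix (Fin n) (Fin n) ℝ) (x v : Fin n → ℝ) :
    piInner π (x ᵥ* timeReversal π M) v = piInner π x (v ᵥ* M) := by
  unfold piInner
  simp only [vm, timeReversal]
  have h : ∀ j, (∑ i, x i * (π j * M j i / π i)) * v j / π j
      = ∑ i, x i * (v j * M j i) / π i := by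
    intro j
    rw [Finset.sum_mul, Finset.sum_div]
    refine Finset.sum_congr rfl fun i _ => ?_
    calc x i * (π j * M j i / π i) * v j / π j
        = x i * (v j * M j i) / π i * (π j / π j) := by ring
      _ = x i * (v j * M j i) / π i := by rw [div_self (hπ j).ne', mul_one]
  rw [Finset.sum_congr rfl fun j _ => h j, Finset.sum_comm]
  refine Finset.sum_congr rfl fun i _ => ?_
  rw [Finset.mul_sum, Finset.sum_div]

private lemma piNorm_vecMul_le (hπ : ∀ i, 0 < π i) (N : Matrix (Fin n) (Fin n) ℝ)
    (x : Fin n → ℝ) :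
    piNorm π (x ᵥ* N) ≤ Real.sqrt (∑ j, (∑ i, π i * N i j ^ 2) / π j) * piNorm π x := by
  have hD : 0 ≤ ∑ j, (∑ i, π i * N i j ^ 2) / π j :=
    Finset.sum_nonneg fun j _ => div_nonneg
      (Finset.sum_nonneg fun i _ => mul_nonneg (hπ i).le (sq_nonneg _)) (hπ j).le
  have key : ∀ j, (x ᵥ* N) j ^ 2 ≤ (∑ i, x i ^ 2 / π i) * (∑ i, π i * N i j ^ 2) := by
    intro j
    rw [vm]
    calc (∑ i, x i * N i j) ^ 2
        = (∑ i, (x i / Real.sqrt (π i)) * (Real.sqrt (π i) * N i j)) ^ 2 := by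
          congr 1
          refine Finset.sum_congr rfl fun i _ => ?_
          have hs : Real.sqrt (π i) ≠ 0 := (Real.sqrt_pos.2 (hπ i)).ne'
          rw [div_mul_eq_mul_div, mul_left_comm, mul_div_cancel_left₀ _ hs]
      _ ≤ (∑ i, (x i / Real.sqrt (π i)) ^ 2) * ∑ i, (Real.sqrt (π i) * N i j) ^ 2 :=
          Finset.sum_mul_sq_le_sq_mul_sq _ _ _
      _ = (∑ i, x i ^ 2 / π i) * (∑ i, π i * N i j ^ 2) := by
          congr 1
          · exact Finset.sum_congr rfl fun i _ => by rw [div_pow, Real.sq_sqrt (hπ i).le]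
          · exact Finset.sum_congr rfl fun i _ => by rw [mul_pow, Real.sq_sqrt (hπ i).le]
  unfold piNorm
  rw [← Real.sqrt_mul hD]
  apply Real.sqrt_le_sqrt
  calc ∑ j, (x ᵥ* N) j ^ 2 / π j
      ≤ ∑ j, (∑ i, x i ^ 2 / π i) * (∑ i, π i * N i j ^ 2) / π j := by
        refine Finset.sum_le_sum fun j _ => ?_
        exact div_le_div_of_nonneg_right (key j) (hπ j).le
    _ = (∑ j, (∑ i, π i * N i j ^ 2) / π j) * ∑ i, x i ^ 2 / π i := by
        rw [Finset.sum_mul]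
        exact Finset.sum_congr rfl fun j _ => by ring

private lemma bddAbove_spec (hπ : ∀ i, 0 < π i) (N : Matrix (Fin n) (Fin n) ℝ) :
    BddAbove {r : ℝ | ∃ x : Fin n → ℝ, x ≠ 0 ∧ piInner π x π = 0 ∧
      r = piNorm π (x ᵥ* N) / piNorm π x} := by
  refine ⟨Real.sqrt (∑ j, (∑ i, π i * N i j ^ 2) / π j), ?_⟩
  rintro r ⟨x, hx0, -, rfl⟩
  rw [div_le_iff₀ (piNorm_pos hπ hx0)]
  exact piNorm_vecMul_le hπ N x

end Aux

theorem stmt_4 (n : ℕ) (M : Matrix (Fin n) (Fin n) ℝ) (π : Fin n → ℝ)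
    (hM : IsStochastic M) (hπ : IsDist π) (hπpos : ∀ i, 0 < π i)
    (hstat : π ᵥ* M = π) :
    specExp π M = Real.sqrt (specExp π (M * timeReversal π M)) := by
  set T := timeReversal π M with hT
  set R := M * T with hRdef
  rcases Nat.lt_or_ge n 2 with hn | hn
  · -- degenerate case: the supremum sets are empty
    have hempty : ∀ N : Matrix (Fin n) (Fin n) ℝ,
        {r : ℝ | ∃ x : Fin n → ℝ, x ≠ 0 ∧ piInner π x π = 0 ∧
          r = piNorm π (x ᵥ* N) / piNorm π x} = ∅ := by
      intro N
      ext r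
      simp only [Set.mem_setOf_eq, Set.mem_empty_iff_false, iff_false, not_exists]
      rintro x ⟨hx0, hxperp, -⟩
      apply hx0
      have hsum : ∑ i, x i = 0 := by rw [← piInner_pi hπpos x]; exact hxperp
      rcases (by omega : n = 0 ∨ n = 1) with h0 | h1
      · subst h0; funext i; exact i.elim0
      · subst h1
        funext i
        have hi : i = 0 := Subsingleton.elim i 0
        rw [hi]
        have : x 0 = 0 := by rwa [Fin.sum_univ_one] at hsum
        simpa using this
    rw [specExp, specExp, hempty M, hempty R, Real.sSup_empty, Real.sqrt_zero]
  · -- main case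
    have hMrow : ∀ i, ∑ j, M i j = 1 := hM.2
    have hTrow : ∀ i, ∑ j, T i j = 1 := by
      intro i
      have : ∑ j, T i j = (∑ j, π j * M j i) / π i := by
        rw [Finset.sum_div]; rfl
      rw [this]
      have hπM : (π ᵥ* M) i = ∑ j, π j * M j i := vm π M i
      rw [← hπM, hstat, div_self (hπpos i).ne']
    -- perpendicularity is preserved
    have hperpM : ∀ x : Fin n → ℝ, piInner π x π = 0 → piInner π (x ᵥ* M) π = 0 := by
      intro x hx
      rw [piInner_pi hπpos, sum_vecMul_eq hMrow, ← piInner_pi hπpos, hx]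
    have hperpT : ∀ x : Fin n → ℝ, piInner π x π = 0 → piInner π (x ᵥ* T) π = 0 := by
      intro x hx
      rw [piInner_pi hπpos, sum_vecMul_eq hTrow, ← piInner_pi hπpos, hx]
    -- key identity : ⟨xR, x⟩ = ‖xM‖²
    have key1 : ∀ x : Fin n → ℝ, piInner π (x ᵥ* R) x = piNorm π (x ᵥ* M) ^ 2 := by
      intro x
      rw [hRdef, ← Matrix.vecMul_vecMul, piAdj hπpos, piInner_self, piNorm_sq hπpos]
    set SA := {r : ℝ | ∃ x : Fin n → ℝ, x ≠ 0 ∧ piInner π x π = 0 ∧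
      r = piNorm π (x ᵥ* M) / piNorm π x} with hSA
    set SB := {r : ℝ | ∃ x : Fin n → ℝ, x ≠ 0 ∧ piInner π x π = 0 ∧
      r = piNorm π (x ᵥ* R) / piNorm π x} with hSB
    have bddA : BddAbove SA := bddAbove_spec hπpos M
    have bddB : BddAbove SB := bddAbove_spec hπpos R
    -- a nonzero perpendicular vector
    have i0 : Fin n := ⟨0, by omega⟩
    obtain ⟨x₀, hx₀0, hx₀p⟩ : ∃ x₀ : Fin n → ℝ, x₀ ≠ 0 ∧ piInner π x₀ π = 0 := by
      refine ⟨Pi.single (⟨0, by omega⟩ : Fin n) 1 - Pi.single (⟨1, by omega⟩ : Fin n) 1, ?_, ?_⟩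
      · intro h
        have h0 := congrFun h ⟨0, by omega⟩
        rw [Pi.sub_apply, Pi.single_eq_same, Pi.single_eq_of_ne (by simp [Fin.ext_iff]),
          Pi.zero_apply] at h0
        norm_num at h0
      · rw [piInner_pi hπpos]
        simp [Finset.sum_sub_distrib, Finset.sum_pi_single']
    set a := sSup SA with ha
    set b := sSup SB with hb
    have hAmem : piNorm π (x₀ ᵥ* M) / piNorm π x₀ ∈ SA := ⟨x₀, hx₀0, hx₀p, rfl⟩
    have hBmem : piNorm π (x₀ ᵥ* R) / piNorm π x₀ ∈ SB := ⟨x₀, hx₀0, hx₀p, rfl⟩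
    have ha0 : 0 ≤ a :=
      le_trans (div_nonneg (piNorm_nonneg' _) (piNorm_nonneg' _)) (le_csSup bddA hAmem)
    have hb0 : 0 ≤ b :=
      le_trans (div_nonneg (piNorm_nonneg' _) (piNorm_nonneg' _)) (le_csSup bddB hBmem)
    -- contraction by a for M
    have hMcon : ∀ z : Fin n → ℝ, piInner π z π = 0 →
        piNorm π (z ᵥ* M) ≤ a * piNorm π z := by
      intro z hz
      by_cases hz0 : z = 0
      · subst hz0
        rw [Matrix.zero_vecMul]
        simp [piNorm]
      · have hmem : piNorm π (z ᵥ* M) / piNorm π z ∈ SA := ⟨z, hz0, hz, rfl⟩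
        have := le_csSup bddA hmem
        rwa [div_le_iff₀ (piNorm_pos hπpos hz0)] at this
    -- contraction by a for T
    have hTcon : ∀ z : Fin n → ℝ, piInner π z π = 0 →
        piNorm π (z ᵥ* T) ≤ a * piNorm π z := by
      intro z hz
      set w := z ᵥ* T with hw
      have hwperp : piInner π w π = 0 := hperpT z hz
      rcases (piNorm_nonneg' (π := π) w).eq_or_lt with h0 | hpos
      · rw [← h0]
        exact mul_nonneg ha0 (piNorm_nonneg' z)
      · have hstep : piNorm π w ^ 2 ≤ piNorm π z * (a * piNorm π w) := by
          calc piNorm π w ^ 2 = piInner π w w := by rw [piInner_self, piNorm_sq hπpos]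
            _ = piInner π z (w ᵥ* M) := by rw [hw, piAdj hπpos]
            _ ≤ piNorm π z * piNorm π (w ᵥ* M) := piCS hπpos _ _
            _ ≤ piNorm π z * (a * piNorm π w) :=
                mul_le_mul_of_nonneg_left (hMcon w hwperp) (piNorm_nonneg' z)
        have : piNorm π w * piNorm π w ≤ (a * piNorm π z) * piNorm π w := by
          rw [← sq]
          calc piNorm π w ^ 2 ≤ piNorm π z * (a * piNorm π w) := hstep
            _ = (a * piNorm π z) * piNorm π w := by ring
        exact le_of_mul_le_mul_right this hpos
    -- prove a = √b
    have h1 : a ≤ Real.sqrt b := by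
      apply Real.sSup_le _ (Real.sqrt_nonneg b)
      rintro r ⟨x, hx0, hxp, rfl⟩
      have nx : 0 < piNorm π x := piNorm_pos hπpos hx0
      have hxRb : piNorm π (x ᵥ* R) ≤ b * piNorm π x := by
        have hmem : piNorm π (x ᵥ* R) / piNorm π x ∈ SB := ⟨x, hx0, hxp, rfl⟩
        have := le_csSup bddB hmem
        rwa [div_le_iff₀ nx] at this
      have hsq : piNorm π (x ᵥ* M) ^ 2 ≤ b * piNorm π x ^ 2 := by
        calc piNorm π (x ᵥ* M) ^ 2 = piInner π (x ᵥ* R) x := (key1 x).symm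
          _ ≤ piNorm π (x ᵥ* R) * piNorm π x := piCS hπpos _ _
          _ ≤ (b * piNorm π x) * piNorm π x :=
              mul_le_mul_of_nonneg_right hxRb (piNorm_nonneg' x)
          _ = b * piNorm π x ^ 2 := by ring
      rw [Real.le_sqrt (div_nonneg (piNorm_nonneg' _) (piNorm_nonneg' _)) hb0]
      rw [div_pow, div_le_iff₀ (by positivity)]
      exact hsq
    have h2 : Real.sqrt b ≤ a := by
      have hba : b ≤ a ^ 2 := by
        apply Real.sSup_le _ (sq_nonneg a)
        rintro r ⟨x, hx0, hxp, rfl⟩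
        have nx : 0 < piNorm π x := piNorm_pos hπpos hx0
        have hbound : piNorm π (x ᵥ* R) ≤ a ^ 2 * piNorm π x := by
          calc piNorm π (x ᵥ* R) = piNorm π ((x ᵥ* M) ᵥ* T) := by
                rw [hRdef, Matrix.vecMul_vecMul]
            _ ≤ a * piNorm π (x ᵥ* M) := hTcon _ (hperpM x hxp)
            _ ≤ a * (a * piNorm π x) :=
                mul_le_mul_of_nonneg_left (hMcon x hxp) ha0
            _ = a ^ 2 * piNorm π x := by ring
        rw [div_le_iff₀ nx]
        exact hbound
      calc Real.sqrt b ≤ Real.sqrt (a ^ 2) := Real.sqrt_le_sqrt hba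
        _ = a := Real.sqrt_sq ha0
    rw [specExp, specExp, ← hSA, ← hSB, ← ha, ← hb]
    exact le_antisymm h1 h2
end

section
/- Let π be a probability distribution with π_i > 0, f:[n]→[0,1] with ∑_i f(i)π_i = μ, and P diagonal with P_{jj} = e^{r f(j)}, where 0 ≤ r ≤ 1/2 (in fact 0 ≤ r ≤ 1 suffices). Then for every vector y with ⟨y,π⟩_π = 0, the parallel component of yP satisfies ‖(yP)^∥‖_π ≤ 2r√μ · ‖y‖_π. -/
open Finset Matrix

lemma exp_le_one_add_two_mul {x : ℝ} (h0 : 0 ≤ x) (h1 : x ≤ 1) :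
    Real.exp x ≤ 1 + 2 * x := by
  have hc := convexOn_exp.2 (Set.mem_univ (0:ℝ)) (Set.mem_univ 1)
    (by linarith : (0:ℝ) ≤ 1 - x) h0 (by ring)
  simp only [smul_eq_mul, mul_zero, mul_one, zero_add, Real.exp_zero] at hc
  have he : Real.exp 1 ≤ 3 := by
    have := Real.exp_one_lt_d9; linarith
  nlinarith [Real.exp_pos 1]

theorem stmt_9 (n : ℕ) (π : Fin n → ℝ) (hπ : IsDist π) (hπpos : ∀ i, 0 < π i)
    (f : Fin n → ℝ) (hf : ∀ i, 0 ≤ f i ∧ f i ≤ 1)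
    (μ : ℝ) (hμ : ∑ i, f i * π i = μ)
    (r : ℝ) (hr0 : 0 ≤ r) (hr : r ≤ 1)
    (P : Matrix (Fin n) (Fin n) ℝ)
    (hP : P = Matrix.diagonal fun j => Real.exp (r * f j))
    (y : Fin n → ℝ) (hy : piInner π y π = 0) :
    piNorm π (parComp π (y ᵥ* P)) ≤ 2 * r * Real.sqrt μ * piNorm π y := by
  subst hP hμ
  have hπne : ∀ i, π i ≠ 0 := fun i => (hπpos i).ne'
  have hy0 : ∑ i, y i = 0 := by
    rw [piInner] at hy
    calc ∑ i, y i = ∑ i, y i * π i / π i := by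
          refine Finset.sum_congr rfl fun i _ => ?_
          rw [mul_div_assoc, div_self (hπne i), mul_one]
      _ = 0 := hy
  have hz : (y ᵥ* Matrix.diagonal fun j => Real.exp (r * f j)) =
      fun j => y j * Real.exp (r * f j) := by
    funext j; simp [Matrix.vecMul_diagonal]
  rw [hz]
  set g : Fin n → ℝ := fun j => Real.exp (r * f j) - 1 with hg
  set C : ℝ := ∑ j, y j * g j with hCdef
  have hC : piInner π (fun j => y j * Real.exp (r * f j)) π = C := by
    rw [piInner, hCdef]
    have h1 : ∀ j ∈ Finset.univ, y j * Real.exp (r * f j) * π j / π j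
        = y j * g j + y j := by
      intro j _
      rw [mul_div_assoc, div_self (hπne j), mul_one, hg]
      ring
    rw [Finset.sum_congr rfl h1, Finset.sum_add_distrib, hy0, add_zero]
  set A : ℝ := ∑ i, (y i) ^ 2 / π i with hAdef
  set B : ℝ := ∑ j, π j * (g j) ^ 2 with hBdef
  have hA0 : 0 ≤ A := Finset.sum_nonneg fun i _ =>
    div_nonneg (sq_nonneg _) (hπpos i).le
  have hB0 : 0 ≤ B := Finset.sum_nonneg fun j _ =>
    mul_nonneg (hπpos j).le (sq_nonneg _)
  have hμ0 : 0 ≤ ∑ i, f i * π i := Finset.sum_nonneg fun i _ =>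
    mul_nonneg (hf i).1 (hπpos i).le
  -- LHS equals |C|
  have hLHS : piNorm π (parComp π (fun j => y j * Real.exp (r * f j))) = |C| := by
    simp only [piNorm, parComp, hC]
    have h2 : ∀ i ∈ Finset.univ, (C * π i) ^ 2 / π i = C ^ 2 * π i := by
      intro i _
      rw [div_eq_iff (hπne i)]
      ring
    rw [Finset.sum_congr rfl h2, ← Finset.mul_sum, hπ.2, mul_one, Real.sqrt_sq_eq_abs]
  rw [hLHS]
  -- Cauchy-Schwarz
  have hCS : C ^ 2 ≤ A * B := by
    have key := Finset.sum_mul_sq_le_sq_mul_sq Finset.univ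
      (fun j => y j / Real.sqrt (π j)) (fun j => Real.sqrt (π j) * g j)
    have e1 : ∀ j ∈ Finset.univ, y j / Real.sqrt (π j) * (Real.sqrt (π j) * g j)
        = y j * g j := by
      intro j _
      have hs : Real.sqrt (π j) ≠ 0 := (Real.sqrt_pos.2 (hπpos j)).ne'  
      field_simp
    have e2 : ∀ j ∈ Finset.univ, (y j / Real.sqrt (π j)) ^ 2 = y j ^ 2 / π j := by
      intro j _
      rw [div_pow, Real.sq_sqrt (hπpos j).le]
    have e3 : ∀ j ∈ Finset.univ, (Real.sqrt (π j) * g j) ^ 2 = π j * g j ^ 2 := by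
      intro j _
      rw [mul_pow, Real.sq_sqrt (hπpos j).le]
    rw [Finset.sum_congr rfl e1, Finset.sum_congr rfl e2, Finset.sum_congr rfl e3] at key
    exact key
  -- bound B
  have hBle : B ≤ 4 * r ^ 2 * ∑ i, f i * π i := by
    rw [hBdef, Finset.mul_sum]
    refine Finset.sum_le_sum fun j _ => ?_
    have hx0 : 0 ≤ r * f j := mul_nonneg hr0 (hf j).1
    have hx1 : r * f j ≤ 1 := by nlinarith [(hf j).1, (hf j).2]
    have hge : (0:ℝ) ≤ g j := by
      rw [hg]; simp only
      nlinarith [Real.add_one_le_exp (r * f j)]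
    have hle : g j ≤ 2 * (r * f j) := by
      rw [hg]; simp only
      have := exp_le_one_add_two_mul hx0 hx1
      linarith
    have h4 : (g j) ^ 2 ≤ (2 * (r * f j)) ^ 2 := by nlinarith
    have h5 : (2 * (r * f j)) ^ 2 ≤ 4 * r ^ 2 * f j := by
      nlinarith [(hf j).1, (hf j).2, sq_nonneg r, mul_nonneg (sq_nonneg r) (hf j).1]
    nlinarith [(hπpos j).le]
  have hBle' : B ≤ (2 * r * Real.sqrt (∑ i, f i * π i)) ^ 2 := by
    have : Real.sqrt (∑ i, f i * π i) ^ 2 = ∑ i, f i * π i := Real.sq_sqrt hμ0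
    nlinarith
  -- finish
  have hyn : piNorm π y = Real.sqrt A := by rw [piNorm, hAdef]
  rw [hyn]
  have h1 : |C| ≤ Real.sqrt A * Real.sqrt B := by
    rw [← Real.sqrt_sq_eq_abs, ← Real.sqrt_mul hA0]
    exact Real.sqrt_le_sqrt hCS
  have h2 : Real.sqrt B ≤ 2 * r * Real.sqrt (∑ i, f i * π i) := by
    have h3 : 0 ≤ 2 * r * Real.sqrt (∑ i, f i * π i) :=
      mul_nonneg (by linarith) (Real.sqrt_nonneg _)
    calc Real.sqrt B ≤ Real.sqrt ((2 * r * Real.sqrt (∑ i, f i * π i)) ^ 2) :=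
          Real.sqrt_le_sqrt hBle'
      _ = _ := by rw [Real.sqrt_sq h3]
  calc |C| ≤ Real.sqrt A * Real.sqrt B := h1
    _ ≤ Real.sqrt A * (2 * r * Real.sqrt (∑ i, f i * π i)) := by
        exact mul_le_mul_of_nonneg_left h2 (Real.sqrt_nonneg _)
    _ = 2 * r * Real.sqrt (∑ i, f i * π i) * Real.sqrt A := by ring
end
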